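/- Let ℓ₁, k₁, k be integers with 0 ≤ ℓ₁ ≤ k₁ < k, and let n = ∏_{j=1}^{k} p_j^{a_j} where the p_j are pairwise distinct primes, the a_j are positive integers, and p_{k₁+1} < p_{k₁+2} < ⋯ < p_k. Let t_min and t_max be positive real numbers with t_min ≤ σ₋₁(n) ≤ t_max, and set m = t_min / ((∏_{j=1}^{ℓ₁} σ₋₁(p_j^{a_j})) · (∏_{j=ℓ₁+1}^{k₁} p_j/(p_j − 1))). If m > 1, then p_{k₁+1} < 1 + (k − k₁)/(m − 1). -/

import Mathlib

open ArithmeticFunction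
open scoped ArithmeticFunction.sigma

private lemma aux_sigma_eq {p : ℕ} (a : ℕ) (hp : p.Prime) :
    (σ 1 (p ^ a) : ℝ) = ((p : ℝ) ^ (a + 1) - 1) / ((p : ℝ) - 1) := by
  have hp2 : (2 : ℝ) ≤ p := by exact_mod_cast hp.two_le
  have hne : (p : ℝ) ≠ 1 := by linarith
  rw [sigma_apply_prime_pow hp]
  push_cast
  rw [← geom_sum_eq hne (a + 1)]
  simp [mul_one]

private lemma aux_sigma_pos {p : ℕ} (a : ℕ) (hp : p.Prime) :
    0 < (σ 1 (p ^ a) : ℝ) / ((p ^ a : ℕ) : ℝ) := by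
  have hp2 : (2 : ℝ) ≤ p := by exact_mod_cast hp.two_le
  have h1 : (1 : ℝ) < (p : ℝ) ^ (a + 1) := by
    apply one_lt_pow₀ (by linarith) (by omega)
  rw [aux_sigma_eq a hp]
  push_cast
  apply div_pos (div_pos (by linarith) (by linarith)) (by positivity)

private lemma aux_sigma_lt {p : ℕ} (a : ℕ) (hp : p.Prime) :
    (σ 1 (p ^ a) : ℝ) / ((p ^ a : ℕ) : ℝ) < (p : ℝ) / ((p : ℝ) - 1) := by
  have hp2 : (2 : ℝ) ≤ p := by exact_mod_cast hp.two_le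
  have hpa : (0 : ℝ) < (p : ℝ) ^ a := by positivity
  rw [aux_sigma_eq a hp]
  push_cast
  rw [div_div, div_lt_div_iff₀ (by nlinarith) (by linarith)]
  have hs : (p : ℝ) ^ (a + 1) = (p : ℝ) ^ a * p := pow_succ _ _
  nlinarith

private lemma aux_telescope (P : ℝ) (hP : 1 < P) (r : ℕ) :
    ∏ i ∈ Finset.range r, (P + i) / (P + i - 1) = (P - 1 + r) / (P - 1) := by
  induction r with
  | zero =>
    simp [div_self (show P - 1 ≠ 0 by linarith)]
  | succ r ih =>
    have hr : (0 : ℝ) ≤ r := Nat.cast_nonneg r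
    rw [Finset.prod_range_succ, ih]
    have h1 : P - 1 ≠ 0 := by linarith
    have h2 : P + r - 1 ≠ 0 := by linarith
    push_cast
    field_simp
    ring

theorem bounds_on_smallest_unknown_prime_c
    (l1 k1 k : ℕ) (hl1k1 : l1 ≤ k1) (hk1k : k1 < k)
    (p a : ℕ → ℕ)
    (hp : ∀ j ∈ Finset.Icc 1 k, (p j).Prime)
    (hdist : ∀ i ∈ Finset.Icc 1 k, ∀ j ∈ Finset.Icc 1 k, i ≠ j → p i ≠ p j)
    (ha : ∀ j ∈ Finset.Icc 1 k, 0 < a j)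
    (hsorted : ∀ i j : ℕ, k1 + 1 ≤ i → i < j → j ≤ k → p i < p j)
    (n : ℕ) (hn : n = ∏ j ∈ Finset.Icc 1 k, p j ^ a j)
    (tmin tmax : ℝ) (htmin : 0 < tmin) (htmax : 0 < tmax)
    (hlow : tmin ≤ (σ 1 n : ℝ) / n) (hhigh : (σ 1 n : ℝ) / n ≤ tmax)
    (m : ℝ)
    (hm : m = tmin /
      ((∏ j ∈ Finset.Icc 1 l1, (σ 1 (p j ^ a j) : ℝ) / (p j ^ a j : ℕ)) *
       (∏ j ∈ Finset.Icc (l1 + 1) k1, (p j : ℝ) / ((p j : ℝ) - 1))))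
    (hm1 : 1 < m) :
    (p (k1 + 1) : ℝ) < 1 + ((k : ℝ) - (k1 : ℝ)) / (m - 1) := by
  classical
  set S : ℕ → ℝ := fun j => (σ 1 (p j ^ a j) : ℝ) / ((p j ^ a j : ℕ) : ℝ) with hS
  set g : ℕ → ℝ := fun j => (p j : ℝ) / ((p j : ℝ) - 1) with hg
  -- membership facts
  have hmem : ∀ j, 1 ≤ j → j ≤ k → j ∈ Finset.Icc 1 k := by
    intro j h1 h2; simp [Finset.mem_Icc]; omega
  -- positivity / inequalities for each index
  have hSpos : ∀ j ∈ Finset.Icc 1 k, 0 < S j := fun j hj => aux_sigma_pos _ (hp j hj)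
  have hSltg : ∀ j ∈ Finset.Icc 1 k, S j < g j := fun j hj => aux_sigma_lt _ (hp j hj)
  have hgpos : ∀ j ∈ Finset.Icc 1 k, 0 < g j := by
    intro j hj
    have h2 : (2 : ℝ) ≤ p j := by exact_mod_cast (hp j hj).two_le
    have : (0:ℝ) < (p j : ℝ) - 1 := by linarith
    positivity
  -- multiplicativity of sigma
  have hcop : (↑(Finset.Icc 1 k) : Set ℕ).Pairwise (Function.onFun Nat.Coprime fun j => p j ^ a j) := by
    intro i hi j hj hij
    simp only [Finset.coe_Icc, Set.mem_Icc] at hi hj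
    have hi' : i ∈ Finset.Icc 1 k := by simp [Finset.mem_Icc]; omega
    have hj' : j ∈ Finset.Icc 1 k := by simp [Finset.mem_Icc]; omega
    simp only [Function.onFun]
    exact Nat.Coprime.pow _ _
      ((Nat.coprime_primes (hp i hi') (hp j hj')).mpr (hdist i hi' j hj' hij))
  have hσn : (σ 1 n : ℝ) = ∏ j ∈ Finset.Icc 1 k, (σ 1 (p j ^ a j) : ℝ) := by
    rw [hn, ArithmeticFunction.IsMultiplicative.map_prod _ isMultiplicative_sigma _ hcop]
    push_cast
    try ring
  have hnℝ : (n : ℝ) = ∏ j ∈ Finset.Icc 1 k, ((p j ^ a j : ℕ) : ℝ) := by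
    rw [hn]; push_cast; try ring
  have hratio : (σ 1 n : ℝ) / n = ∏ j ∈ Finset.Icc 1 k, S j := by
    rw [hσn, hnℝ, ← Finset.prod_div_distrib]
  -- split the product
  have hsplit : (∏ j ∈ Finset.Ioc 0 l1, S j) * (∏ j ∈ Finset.Ioc l1 k1, S j) *
      (∏ j ∈ Finset.Ioc k1 k, S j) = ∏ j ∈ Finset.Icc 1 k, S j := by
    rw [Finset.prod_Ioc_consecutive S (Nat.zero_le l1) hl1k1,
        Finset.prod_Ioc_consecutive S (Nat.zero_le k1) (le_of_lt hk1k),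
        show Finset.Icc 1 k = Finset.Ioc 0 k from Finset.Icc_add_one_left_eq_Ioc 0 k]
  set A := ∏ j ∈ Finset.Ioc 0 l1, S j with hA
  set B' := ∏ j ∈ Finset.Ioc l1 k1, S j with hB'
  set B := ∏ j ∈ Finset.Ioc l1 k1, g j with hB
  set C := ∏ j ∈ Finset.Ioc k1 k, S j with hC
  have hsub1 : Finset.Ioc 0 l1 ⊆ Finset.Icc 1 k := by
    intro x hx; simp [Finset.mem_Ioc] at hx; exact hmem x (by omega) (by omega)
  have hsub2 : Finset.Ioc l1 k1 ⊆ Finset.Icc 1 k := by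
    intro x hx; simp [Finset.mem_Ioc] at hx; exact hmem x (by omega) (by omega)
  have hsub3 : Finset.Ioc k1 k ⊆ Finset.Icc 1 k := by
    intro x hx; simp [Finset.mem_Ioc] at hx; exact hmem x (by omega) (by omega)
  have hApos : 0 < A := Finset.prod_pos fun j hj => hSpos j (hsub1 hj)
  have hB'pos : 0 < B' := Finset.prod_pos fun j hj => hSpos j (hsub2 hj)
  have hBpos : 0 < B := Finset.prod_pos fun j hj => hgpos j (hsub2 hj)
  have hCpos : 0 < C := Finset.prod_pos fun j hj => hSpos j (hsub3 hj)
  have hB'leB : B' ≤ B := Finset.prod_le_prod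
    (fun j hj => le_of_lt (hSpos j (hsub2 hj)))
    (fun j hj => le_of_lt (hSltg j (hsub2 hj)))
  -- rewrite hm's denominators
  have e1 : Finset.Icc 1 l1 = Finset.Ioc 0 l1 := Finset.Icc_add_one_left_eq_Ioc 0 l1
  have e2 : Finset.Icc (l1 + 1) k1 = Finset.Ioc l1 k1 := Finset.Icc_add_one_left_eq_Ioc l1 k1
  have hmA : m = tmin / (A * B) := by rw [hm, e1, e2]
  -- m ≤ C
  have htminle : tmin ≤ A * B' * C := by
    calc tmin ≤ (σ 1 n : ℝ) / n := hlow
    _ = A * B' * C := by rw [hratio, ← hsplit]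
  have hmleC : m ≤ C := by
    rw [hmA, div_le_iff₀ (mul_pos hApos hBpos)]
    calc tmin ≤ A * B' * C := htminle
    _ ≤ A * B * C := by
      apply mul_le_mul_of_nonneg_right _ hCpos.le
      exact mul_le_mul_of_nonneg_left hB'leB hApos.le
    _ = C * (A * B) := by ring
  -- the prime P and its facts
  set P := p (k1 + 1) with hP
  have hPk : k1 + 1 ∈ Finset.Icc 1 k := hmem _ (by omega) (by omega)
  have hP2 : 2 ≤ P := (hp _ hPk).two_le
  have hP2ℝ : (2 : ℝ) ≤ (P : ℝ) := by exact_mod_cast hP2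
  -- increasing primes lemma
  have hkey : ∀ d, k1 + 1 + d ≤ k → P + d ≤ p (k1 + 1 + d) := by
    intro d
    induction d with
    | zero => intro _; simp [hP]
    | succ d ih =>
      intro hd
      have h1 := ih (by omega)
      have h2 : p (k1 + 1 + d) < p (k1 + 1 + d + 1) :=
        hsorted _ _ (by omega) (by omega) (by omega)
      have e : k1 + 1 + (d + 1) = k1 + 1 + d + 1 := by omega
      rw [e]
      omega
  -- rewrite C as a range product
  set r := k - k1 with hr
  have hrpos : 0 < r := by omega
  have hIoc : Finset.Ioc k1 k = Finset.Ico (k1 + 1) (k + 1) := by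
    rw [Finset.Ico_add_one_right_eq_Icc, Finset.Icc_add_one_left_eq_Ioc]
  have hCrange : C = ∏ i ∈ Finset.range r, S (k1 + 1 + i) := by
    have e : k + 1 - (k1 + 1) = r := by omega
    rw [hC, hIoc, Finset.prod_Ico_eq_prod_range, e]
  -- C < telescoping product
  have hClt : C < (((P : ℝ) - 1 + r) / ((P : ℝ) - 1)) := by
    rw [hCrange, ← aux_telescope (P : ℝ) (by linarith) r]
    apply Finset.prod_lt_prod_of_nonempty
    · intro i hi
      simp only [Finset.mem_range] at hi
      exact hSpos _ (hmem _ (by omega) (by omega))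
    · intro i hi
      simp only [Finset.mem_range] at hi
      have hjmem : k1 + 1 + i ∈ Finset.Icc 1 k := hmem _ (by omega) (by omega)
      have h1 : S (k1 + 1 + i) < g (k1 + 1 + i) := hSltg _ hjmem
      have h2 : g (k1 + 1 + i) ≤ ((P : ℝ) + i) / ((P : ℝ) + i - 1) := by
        have hpi : P + i ≤ p (k1 + 1 + i) := hkey i (by omega)
        have hpiℝ : ((P : ℝ) + i) ≤ (p (k1 + 1 + i) : ℝ) := by exact_mod_cast hpi
        have hinn : (0 : ℝ) ≤ (i : ℝ) := Nat.cast_nonneg i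
        have hx1 : (1 : ℝ) < (P : ℝ) + i := by linarith
        have hy1 : (1 : ℝ) < (p (k1 + 1 + i) : ℝ) := by linarith
        rw [hg, div_le_div_iff₀ (by linarith) (by linarith)]
        nlinarith
      linarith
    · exact Finset.nonempty_range_iff.mpr (by omega)
  -- finish
  have hrcast : (r : ℝ) = (k : ℝ) - (k1 : ℝ) := by
    rw [hr]; push_cast [Nat.cast_sub (le_of_lt hk1k)]; ring
  have hP1pos : (0 : ℝ) < (P : ℝ) - 1 := by linarith
  have hmlt : m < ((P : ℝ) - 1 + r) / ((P : ℝ) - 1) := lt_of_le_of_lt hmleC hClt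
  rw [lt_div_iff₀ hP1pos] at hmlt
  have hm1pos : (0 : ℝ) < m - 1 := by linarith
  rw [← hrcast]
  have hfin : (P : ℝ) - 1 < (r : ℝ) / (m - 1) := by
    rw [lt_div_iff₀ hm1pos]
    nlinarith
  linarith
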